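/- Let X be a proper metric space and let Γ be a group acting on X by isometries, properly discontinuously and cocompactly. Then every element γ ∈ Γ is semisimple, i.e. its displacement function attains its infimum: there exists a point x ∈ X such that dist(x, γ•x) = ⨅_{y ∈ X} dist(y, γ•y). -/

import Mathlib

open Pointwise

/-- Let `X` be a proper metric space and let `Γ` be a group acting on `X`
by isometries, properly discontinuously and cocompactly. Then every element `γ ∈ Γ` is
semisimple: its displacement function attains its infimum. -/
theorem every_element_semisimple
    {X : Type*} [MetricSpace X] [ProperSpace X] [Nonempty X]
    {Γ : Type*} [Group Γ] [MulAction Γ X]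
    (hiso : ∀ (γ : Γ) (x y : X), dist (γ • x) (γ • y) = dist x y)
    (hpd : ∀ K L : Set X, IsCompact K → IsCompact L →
      {γ : Γ | (γ • K) ∩ L ≠ ∅}.Finite)
    (hcc : ∃ K : Set X, IsCompact K ∧ ⋃ γ : Γ, γ • K = Set.univ)
    (γ : Γ) :
    ∃ x : X, dist x (γ • x) = ⨅ y : X, dist y (γ • y) := by
  obtain ⟨K, hKc, hKu⟩ := hcc
  set m := ⨅ y : X, dist y (γ • y) with hm
  have hbdd : BddBelow (Set.range fun y : X => dist y (γ • y)) :=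
    ⟨0, by rintro _ ⟨y, rfl⟩; exact dist_nonneg⟩
  have hmle : ∀ y : X, m ≤ dist y (γ • y) := fun y => ciInf_le hbdd y
  -- choose an almost-minimizing sequence
  have hseq : ∀ n : ℕ, ∃ x : X, dist x (γ • x) < m + 1 / (n + 1) := by
    intro n
    apply exists_lt_of_ciInf_lt
    exact lt_add_of_pos_right m (by positivity)
  choose x hx using hseq
  -- decompose each point via cocompactness
  have hdec : ∀ n : ℕ, ∃ (g : Γ) (k : X), k ∈ K ∧ g • k = x n := by
    intro n
    have : x n ∈ ⋃ g : Γ, g • K := by rw [hKu]; trivial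
    obtain ⟨_, ⟨g, rfl⟩, k, hk, hgk⟩ := this
    exact ⟨g, k, hk, hgk⟩
  choose g k hk hgk using hdec
  set h : ℕ → Γ := fun n => (g n)⁻¹ * γ * g n with hh
  -- conjugation identity
  have hconj : ∀ (g0 : Γ) (y : X),
      dist (g0 • y) (γ • (g0 • y)) = dist y ((g0⁻¹ * γ * g0) • y) := by
    intro g0 y
    have : γ • (g0 • y) = g0 • ((g0⁻¹ * γ * g0) • y) := by
      rw [smul_smul, smul_smul]
      congr 1
      group
    rw [this, hiso]
  have key : ∀ n, dist (k n) (h n • k n) = dist (x n) (γ • x n) := by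
    intro n
    rw [← hgk n, hconj]
  -- a compact set L containing all h n • k n
  obtain ⟨c⟩ := (inferInstance : Nonempty X)
  obtain ⟨R, hR⟩ := hKc.isBounded.subset_closedBall c
  set L := Metric.closedBall c (R + (m + 1)) with hL
  have hmem : ∀ n, h n ∈ {g : Γ | (g • K) ∩ L ≠ ∅} := by
    intro n
    have h1 : h n • k n ∈ h n • K := Set.smul_mem_smul_set (hk n)
    have h2 : h n • k n ∈ L := by
      have hd : dist (h n • k n) c ≤ dist (h n • k n) (k n) + dist (k n) c :=
        dist_triangle _ _ _
      have h3 : dist (h n • k n) (k n) ≤ m + 1 := by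
        rw [dist_comm, key n]
        have := hx n
        have h4 : 1 / ((n : ℝ) + 1) ≤ 1 := by
          rw [div_le_one (by positivity)]; linarith [Nat.cast_nonneg (α := ℝ) n]
        linarith
      have h5 : dist (k n) c ≤ R := hR (hk n)
      simp only [hL, Metric.mem_closedBall]
      linarith
    exact Set.nonempty_iff_ne_empty.mp ⟨h n • k n, h1, h2⟩
  have hSfin : {g : Γ | (g • K) ∩ L ≠ ∅}.Finite :=
    hpd K L hKc (isCompact_closedBall c _)
  -- pigeonhole: one conjugate occurs infinitely often
  have : Finite {g : Γ | (g • K) ∩ L ≠ ∅} := hSfin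
  obtain ⟨⟨h0, hh0⟩, hfib⟩ :=
    Finite.exists_infinite_fiber (fun n : ℕ => (⟨h n, hmem n⟩ : {g : Γ | (g • K) ∩ L ≠ ∅}))
  have hNinf : {n : ℕ | h n = h0}.Infinite := by
    rw [← Set.infinite_coe_iff]
    refine Infinite.of_injective
      (fun p : ↥((fun n : ℕ => (⟨h n, hmem n⟩ : {g : Γ | (g • K) ∩ L ≠ ∅})) ⁻¹' {⟨h0, hh0⟩}) =>
        (⟨p.1, by have := p.2; simpa using congrArg Subtype.val this⟩ : {n : ℕ | h n = h0}))
      ?_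
    intro a b hab
    simp only [Subtype.mk.injEq] at hab
    exact Subtype.ext hab
  -- enumerate that set
  set N := {n : ℕ | h n = h0} with hN
  have hnth : ∀ j : ℕ, Nat.nth (· ∈ N) j ∈ N := fun j => Nat.nth_mem_of_infinite hNinf j
  have hnthmono : StrictMono (Nat.nth (· ∈ N)) := Nat.nth_strictMono hNinf
  -- compactness: convergent subsequence
  obtain ⟨a, haK, φ, hφ, hconv⟩ :=
    hKc.tendsto_subseq (x := fun j => k (Nat.nth (· ∈ N) j)) (fun j => hk _)
  set ψ : ℕ → ℕ := fun j => Nat.nth (· ∈ N) (φ j) with hψ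
  have hψN : ∀ j, h (ψ j) = h0 := fun j => hnth (φ j)
  have hψge : ∀ j, j ≤ ψ j := fun j =>
    le_trans (hφ.id_le j) ((hnthmono.id_le (φ j)))
  -- the displacement along the subsequence tends to m
  have hcont : Continuous fun y : X => dist y (h0 • y) := by
    have hi : Isometry fun y : X => h0 • y := Isometry.of_dist_eq (by intro a b; exact hiso h0 a b)
    exact continuous_id.dist hi.continuous
  have htend1 : Filter.Tendsto (fun j => dist (k (ψ j)) (h0 • k (ψ j)))
      Filter.atTop (nhds (dist a (h0 • a))) := hcont.continuousAt.tendsto.comp hconv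
  have htend2 : Filter.Tendsto (fun j => dist (k (ψ j)) (h0 • k (ψ j)))
      Filter.atTop (nhds m) := by
    have hub : ∀ j, dist (k (ψ j)) (h0 • k (ψ j)) ≤ m + 1 / (j + 1) := by
      intro j
      rw [← hψN j, key (ψ j)]
      refine le_trans (le_of_lt (hx (ψ j))) ?_
      have : (1 : ℝ) / (ψ j + 1) ≤ 1 / (j + 1) := by
        apply one_div_le_one_div_of_le (by positivity)
        have hc : (j : ℝ) ≤ ψ j := by exact_mod_cast hψge j
        linarith
      linarith
    have hlb : ∀ j, m ≤ dist (k (ψ j)) (h0 • k (ψ j)) := by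
      intro j
      rw [← hψN j, key (ψ j)]
      exact hmle _
    have h1 : Filter.Tendsto (fun j : ℕ => m + 1 / ((j : ℝ) + 1)) Filter.atTop (nhds m) := by
      have := (tendsto_one_div_add_atTop_nhds_zero_nat :
        Filter.Tendsto (fun n : ℕ => 1 / ((n : ℝ) + 1)) Filter.atTop (nhds 0))
      simpa using tendsto_const_nhds.add this
    exact tendsto_of_tendsto_of_tendsto_of_le_of_le tendsto_const_nhds h1 hlb hub
  have hda : dist a (h0 • a) = m := tendsto_nhds_unique htend1 htend2
  -- conclude
  obtain ⟨n0, hn0⟩ := hNinf.nonempty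
  refine ⟨g n0 • a, ?_⟩
  rw [hconj (g n0) a]
  have : (g n0)⁻¹ * γ * g n0 = h0 := hn0
  rw [this, hda]
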